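/- Exhaustive rewriting solves the well-defined conversion problem: for a well-defining conversion C over a finite set B of base units, the conversion closure C* equals the relation C♯ := { (u, r·s⁻¹, v) | rwr*(C)(u) = (r, w) and rwr*(C)(v) = (s, w') with w = w' }, where rwr*(C)(u) := rwr(C)^{|B|}(eval u). -/

import Mathlib

open Finsupp

/-- The positive rationals, as a multiplicative group. -/
abbrev Ratio : Type := {q : ℚ // 0 < q}

/-- Prefixes: the free abelian group over base prefixes `P`. -/
abbrev PrefG (P : Type*) : Type _ := P →₀ ℤ
/-- Root units: the free abelian group over base units `B`. -/
abbrev RootG (B : Type*) : Type _ := B →₀ ℤ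
/-- Units: the free abelian group over preunits (prefix, base unit). -/
abbrev UnitG (P B : Type*) : Type _ := ((P →₀ ℤ) × B) →₀ ℤ

variable {P B D : Type*}

/-- The root of a unit: forget all prefixes. -/
noncomputable def rootU (u : UnitG P B) : RootG B :=
  Finsupp.mapDomain Prod.snd u

/-- Embed a root unit back into the units, with empty prefixes. -/
noncomputable def unrootU (f : RootG B) : UnitG P B :=
  Finsupp.mapDomain (fun b => ((0 : PrefG P), b)) f

/-- Strip all prefixes from a unit. -/
noncomputable def stripU (u : UnitG P B) : UnitG P B := unrootU (rootU u)

/-- The value of a prefix, given values of base prefixes. -/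
noncomputable def valP (val₀ : P → Ratio) (f : PrefG P) : Ratio :=
  ∏ p ∈ f.support, val₀ p ^ (f p)

/-- The prefix value of a unit. -/
noncomputable def pvalU (val₀ : P → Ratio) (g : UnitG P B) : Ratio :=
  ∏ x ∈ g.support, valP val₀ x.1 ^ (g x)

/-- The dimension of a root unit, given dimensions of base units. -/
noncomputable def dimRoot (dim₀ : B → D →₀ ℤ) (f : RootG B) : D →₀ ℤ :=
  ∑ b ∈ f.support, f b • dim₀ b

/-- The dimension of a unit. -/
noncomputable def dimU (dim₀ : B → D →₀ ℤ) (u : UnitG P B) : D →₀ ℤ :=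
  dimRoot dim₀ (rootU u)

/-- The combined prefix of a unit. -/
noncomputable def prefU (u : UnitG P B) : PrefG P :=
  ∑ x ∈ u.support, u x • x.1

/-- Normalization of a unit. -/
noncomputable def normU (u : UnitG P B) : PrefG P × RootG B :=
  (prefU u, rootU u)

/-- Evaluation of a unit. -/
noncomputable def evalU (val₀ : P → Ratio) (u : UnitG P B) : Ratio × RootG B :=
  (pvalU val₀ u, rootU u)

/-- A unit conversion: dimensionally consistent and functional in the ratio. -/
def IsConversion (dim₀ : B → D →₀ ℤ) (C : Set (UnitG P B × Ratio × UnitG P B)) : Prop :=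
  (∀ u r v, (u, r, v) ∈ C → dimU dim₀ u = dimU dim₀ v) ∧
  (∀ u r r' v, (u, r, v) ∈ C → (u, r', v) ∈ C → r = r')

/-- The closure rules for unit conversions. -/
inductive ClosureRel {P B : Type*} (val₀ : P → Ratio)
    (C : Set (UnitG P B × Ratio × UnitG P B)) :
    UnitG P B → Ratio → UnitG P B → Prop
  | base {u r v} : (u, r, v) ∈ C → ClosureRel val₀ C u r v
  | mul {u r v u' r' v'} : ClosureRel val₀ C u r v → ClosureRel val₀ C u' r' v' →
      ClosureRel val₀ C (u + u') (r * r') (v + v')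
  | inv {u r v} : ClosureRel val₀ C u r v → ClosureRel val₀ C (-u) r⁻¹ (-v)
  | pe (u : UnitG P B) : ClosureRel val₀ C u (pvalU val₀ u) (stripU u)
  | pe' (u : UnitG P B) : ClosureRel val₀ C (stripU u) (pvalU val₀ u)⁻¹ u

/-- The conversion closure: the smallest relation containing `C` closed under the rules. -/
def convClosure (val₀ : P → Ratio) (C : Set (UnitG P B × Ratio × UnitG P B)) :
    Set (UnitG P B × Ratio × UnitG P B) :=
  {t | ClosureRel val₀ C t.1 t.2.1 t.2.2}

/-- Convertibility with respect to a conversion. -/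
def Convertible (C : Set (UnitG P B × Ratio × UnitG P B)) (u v : UnitG P B) : Prop :=
  ∃ r, (u, r, v) ∈ C

/-- Coherence with respect to a conversion. -/
def Coherent (C : Set (UnitG P B × Ratio × UnitG P B)) (u v : UnitG P B) : Prop :=
  (u, (1 : Ratio), v) ∈ C

/-- The unit `δu₀` corresponding to a base unit. -/
noncomputable def deltaB (P : Type*) {B : Type*} (u₀ : B) : UnitG P B :=
  Finsupp.single ((0 : PrefG P), u₀) 1

/-- A defining conversion: basic and functional in its first component. -/
def IsDefining (C : Set (UnitG P B × Ratio × UnitG P B)) : Prop :=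
  (∀ u r v, (u, r, v) ∈ C → ∃ u₀ : B, u = deltaB P u₀) ∧
  (∀ u r v r' v', (u, r, v) ∈ C → (u, r', v') ∈ C → v = v')

/-- One-step dependency between base units. -/
def Depends (C : Set (UnitG P B × Ratio × UnitG P B)) (u₀ v₀ : B) : Prop :=
  ∃ r v, (deltaB P u₀, r, v) ∈ C ∧ v₀ ∈ (rootU v).support

/-- The dependency order `>_C`. -/
def DepOrd (C : Set (UnitG P B × Ratio × UnitG P B)) : B → B → Prop :=
  Relation.TransGen (Depends C)

/-- The domain of a defining conversion. -/
def domC (C : Set (UnitG P B × Ratio × UnitG P B)) : Set B :=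
  {u₀ : B | ∃ r v, (deltaB P u₀, r, v) ∈ C}


/-- Definition expansion. -/
noncomputable def xpd (C : Set (UnitG P B × Ratio × UnitG P B)) (u₀ : B) :
    Ratio × UnitG P B :=
  haveI := Classical.propDecidable (∃ rv : Ratio × UnitG P B, (deltaB P u₀, rv.1, rv.2) ∈ C)
  if h : ∃ rv : Ratio × UnitG P B, (deltaB P u₀, rv.1, rv.2) ∈ C then h.choose
  else (1, deltaB P u₀)

/-- The base rewriting map. -/
noncomputable def rwrB (val₀ : P → Ratio) (C : Set (UnitG P B × Ratio × UnitG P B))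
    (u₀ : B) : Ratio × RootG B :=
  ((xpd C u₀).1 * pvalU val₀ (xpd C u₀).2, rootU (xpd C u₀).2)

/-- One rewriting step on evaluated units. -/
noncomputable def rwrStep (val₀ : P → Ratio) (C : Set (UnitG P B × Ratio × UnitG P B)) :
    Ratio × RootG B → Ratio × RootG B :=
  fun p => (p.1 * ∏ b ∈ p.2.support, (rwrB val₀ C b).1 ^ (p.2 b),
            ∑ b ∈ p.2.support, p.2 b • (rwrB val₀ C b).2)

/-- Exhaustive rewriting: evaluate and rewrite `|B|` times. -/
noncomputable def rwrStar (val₀ : P → Ratio) (C : Set (UnitG P B × Ratio × UnitG P B))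
    (u : UnitG P B) : Ratio × RootG B :=
  (rwrStep val₀ C)^[Nat.card B] (evalU val₀ u)

section AuxCER

variable {P B : Type*}

/-! ### zpow lemmas for `Ratio` (whose `ℤ`-power is the `Positive` instance) -/

lemma Ratio.coe_mul (a b : Ratio) : ((a * b : Ratio) : ℚ) = a * b := rfl

lemma rpow_zero (a : Ratio) : a ^ (0 : ℤ) = 1 := Subtype.ext (zpow_zero _)

lemma rpow_one (a : Ratio) : a ^ (1 : ℤ) = a := Subtype.ext (zpow_one _)

lemma one_rpow (n : ℤ) : (1 : Ratio) ^ n = 1 := Subtype.ext (one_zpow _)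

lemma rpow_add (a : Ratio) (m n : ℤ) : a ^ (m + n) = a ^ m * a ^ n :=
  Subtype.ext (zpow_add₀ a.2.ne' m n)

lemma rpow_add_one (a : Ratio) (m : ℤ) : a ^ (m + 1) = a ^ m * a := by
  rw [rpow_add, rpow_one]

lemma rpow_sub_one (a : Ratio) (m : ℤ) : a ^ (m - 1) = a ^ m * a⁻¹ := by
  refine Subtype.ext ?_
  show (a : ℚ) ^ (m - 1) = (a : ℚ) ^ m * (a : ℚ)⁻¹
  rw [zpow_sub₀ a.2.ne', zpow_one]
  rfl

end AuxCER
section AuxCER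

variable {P B : Type*}

/-! ### Basic computations for values and roots -/

lemma valP_zero (val₀ : P → Ratio) : valP val₀ (0 : PrefG P) = 1 := by
  simp [valP]

lemma pvalU_eq_prod (val₀ : P → Ratio) (u : UnitG P B) :
    pvalU val₀ u = u.prod (fun x k => valP val₀ x.1 ^ k) := rfl

lemma pvalU_zero (val₀ : P → Ratio) : pvalU val₀ (0 : UnitG P B) = 1 := by
  simp [pvalU]

lemma pvalU_add (val₀ : P → Ratio) (u v : UnitG P B) :
    pvalU val₀ (u + v) = pvalU val₀ u * pvalU val₀ v := by
  rw [pvalU_eq_prod, pvalU_eq_prod, pvalU_eq_prod]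
  exact Finsupp.prod_add_index' (fun a => rpow_zero _) (fun a b₁ b₂ => rpow_add _ b₁ b₂)

lemma pvalU_neg (val₀ : P → Ratio) (u : UnitG P B) :
    pvalU val₀ (-u) = (pvalU val₀ u)⁻¹ := by
  have h : pvalU val₀ u * pvalU val₀ (-u) = 1 := by
    rw [← pvalU_add]; simp [pvalU_zero]
  exact (inv_eq_of_mul_eq_one_right h).symm

lemma rootU_zero : rootU (0 : UnitG P B) = 0 := Finsupp.mapDomain_zero

lemma rootU_add (u v : UnitG P B) : rootU (u + v) = rootU u + rootU v :=
  Finsupp.mapDomain_add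

lemma rootU_neg (u : UnitG P B) : rootU (-u) = - rootU u :=
  map_neg (Finsupp.mapDomain.addMonoidHom Prod.snd) u

lemma unrootU_sum {ι : Type*} (S : Finset ι) (g : ι → RootG B) :
    (unrootU (∑ i ∈ S, g i) : UnitG P B) = ∑ i ∈ S, unrootU (g i) :=
  map_sum (Finsupp.mapDomain.addMonoidHom _) _ _

lemma unrootU_zsmul (z : ℤ) (f : RootG B) :
    (unrootU (z • f) : UnitG P B) = z • unrootU f :=
  map_zsmul (Finsupp.mapDomain.addMonoidHom _) _ _

lemma unrootU_single (b : B) :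
    (unrootU (Finsupp.single b (1 : ℤ)) : UnitG P B) = deltaB P b :=
  Finsupp.mapDomain_single

lemma rootU_unrootU (f : RootG B) : rootU (unrootU f : UnitG P B) = f := by
  rw [rootU, unrootU, ← Finsupp.mapDomain_comp]
  exact Finsupp.mapDomain_id

lemma pvalU_unrootU (val₀ : P → Ratio) (f : RootG B) :
    pvalU val₀ (unrootU f : UnitG P B) = 1 := by
  classical
  rw [pvalU]
  apply Finset.prod_eq_one
  intro x hx
  have hx' := Finsupp.mapDomain_support (f := fun b : B => ((0 : PrefG P), b)) hx
  obtain ⟨b, _, rfl⟩ := Finset.mem_image.mp hx'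
  simp [valP_zero, one_rpow]

lemma rootU_stripU (u : UnitG P B) : rootU (stripU u) = rootU u :=
  rootU_unrootU _

lemma pvalU_stripU (val₀ : P → Ratio) (u : UnitG P B) :
    pvalU val₀ (stripU u) = 1 := pvalU_unrootU _ _

lemma stripU_stripU (u : UnitG P B) : stripU (stripU u) = stripU u := by
  rw [stripU, rootU_stripU]; rfl

lemma rootU_deltaB (b : B) : rootU (deltaB P b) = Finsupp.single b 1 :=
  Finsupp.mapDomain_single

lemma pvalU_deltaB (val₀ : P → Ratio) (b : B) : pvalU val₀ (deltaB P b) = 1 := by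
  rw [deltaB, pvalU, Finsupp.support_single_ne_zero _ one_ne_zero]
  simp [valP_zero, one_rpow]

end AuxCER
section AuxCER2

variable {P B : Type*}

/-! ### `xpd` and `rwrB` computations -/

lemma xpd_mem {C : Set (UnitG P B × Ratio × UnitG P B)} {b : B} (hb : b ∈ domC C) :
    (deltaB P b, (xpd C b).1, (xpd C b).2) ∈ C := by
  obtain ⟨r, v, hrv⟩ := hb
  have hex : ∃ rv : Ratio × UnitG P B, (deltaB P b, rv.1, rv.2) ∈ C := ⟨(r, v), hrv⟩
  rw [xpd, dif_pos hex]
  exact hex.choose_spec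

lemma xpd_not_mem {C : Set (UnitG P B × Ratio × UnitG P B)} {b : B} (hb : b ∉ domC C) :
    xpd C b = (1, deltaB P b) := by
  have hex : ¬ ∃ rv : Ratio × UnitG P B, (deltaB P b, rv.1, rv.2) ∈ C := by
    rintro ⟨rv, h⟩; exact hb ⟨rv.1, rv.2, h⟩
  rw [xpd, dif_neg hex]

lemma rwrB_not_mem (val₀ : P → Ratio) {C : Set (UnitG P B × Ratio × UnitG P B)} {b : B}
    (hb : b ∉ domC C) : rwrB val₀ C b = (1, Finsupp.single b 1) := by
  rw [rwrB, xpd_not_mem hb]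
  simp [pvalU_deltaB, rootU_deltaB]

/-! ### `rwrStep` structure lemmas -/

lemma rwrStep_fst (val₀ : P → Ratio) (C : Set (UnitG P B × Ratio × UnitG P B))
    (p : Ratio × RootG B) :
    (rwrStep val₀ C p).1 = p.1 * ∏ b ∈ p.2.support, (rwrB val₀ C b).1 ^ (p.2 b) := rfl

lemma rwrStep_snd (val₀ : P → Ratio) (C : Set (UnitG P B × Ratio × UnitG P B))
    (p : Ratio × RootG B) :
    (rwrStep val₀ C p).2 = ∑ b ∈ p.2.support, p.2 b • (rwrB val₀ C b).2 := rfl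

lemma rwrStep_scale (val₀ : P → Ratio) (C : Set (UnitG P B × Ratio × UnitG P B))
    (c s : Ratio) (f : RootG B) :
    rwrStep val₀ C (c * s, f) = (c * (rwrStep val₀ C (s, f)).1, (rwrStep val₀ C (s, f)).2) := by
  simp [rwrStep, mul_assoc]

lemma iterate_scale (val₀ : P → Ratio) (C : Set (UnitG P B × Ratio × UnitG P B))
    (k : ℕ) (c s : Ratio) (f : RootG B) :
    (rwrStep val₀ C)^[k] (c * s, f) =
      (c * ((rwrStep val₀ C)^[k] (s, f)).1, ((rwrStep val₀ C)^[k] (s, f)).2) := by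
  induction k generalizing s f with
  | zero => rfl
  | succ k ih =>
    rw [Function.iterate_succ_apply, Function.iterate_succ_apply, rwrStep_scale]
    have := ih (rwrStep val₀ C (s, f)).1 (rwrStep val₀ C (s, f)).2
    simpa using this

lemma rwrStep_mul (val₀ : P → Ratio) (C : Set (UnitG P B × Ratio × UnitG P B))
    (s s' : Ratio) (f f' : RootG B) :
    rwrStep val₀ C (s * s', f + f') =
      ((rwrStep val₀ C (s, f)).1 * (rwrStep val₀ C (s', f')).1,
       (rwrStep val₀ C (s, f)).2 + (rwrStep val₀ C (s', f')).2) := by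
  refine Prod.ext ?_ ?_
  · show s * s' * (f + f').prod (fun b k => (rwrB val₀ C b).1 ^ k) = _
    rw [Finsupp.prod_add_index' (fun a => rpow_zero _) (fun a m n => rpow_add _ m n)]
    show _ = s * Finsupp.prod f _ * (s' * Finsupp.prod f' _)
    rw [mul_mul_mul_comm]
  · show (f + f').sum (fun b k => k • (rwrB val₀ C b).2) = _
    rw [Finsupp.sum_add_index' (h := fun b k => k • (rwrB val₀ C b).2)
      (fun a => zero_smul ℤ _) (fun a m n => add_smul m n ((rwrB val₀ C a).2))]
    rfl

lemma rwrStep_one (val₀ : P → Ratio) (C : Set (UnitG P B × Ratio × UnitG P B)) :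
    rwrStep val₀ C (1, (0 : RootG B)) = (1, 0) := by
  simp [rwrStep]

lemma rwrStep_neg (val₀ : P → Ratio) (C : Set (UnitG P B × Ratio × UnitG P B))
    (s : Ratio) (f : RootG B) :
    rwrStep val₀ C (s⁻¹, -f) = ((rwrStep val₀ C (s, f)).1⁻¹, -(rwrStep val₀ C (s, f)).2) := by
  have h := rwrStep_mul val₀ C s s⁻¹ f (-f)
  rw [mul_inv_cancel, add_neg_cancel, rwrStep_one] at h
  have h1 : (rwrStep val₀ C (s, f)).1 * (rwrStep val₀ C (s⁻¹, -f)).1 = 1 :=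
    (congrArg Prod.fst h).symm
  have h2 : (rwrStep val₀ C (s, f)).2 + (rwrStep val₀ C (s⁻¹, -f)).2 = 0 :=
    (congrArg Prod.snd h).symm
  exact Prod.ext (inv_eq_of_mul_eq_one_right h1).symm (neg_eq_of_add_eq_zero_right h2).symm

lemma iterate_mul (val₀ : P → Ratio) (C : Set (UnitG P B × Ratio × UnitG P B))
    (k : ℕ) (s s' : Ratio) (f f' : RootG B) :
    (rwrStep val₀ C)^[k] (s * s', f + f') =
      (((rwrStep val₀ C)^[k] (s, f)).1 * ((rwrStep val₀ C)^[k] (s', f')).1,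
       ((rwrStep val₀ C)^[k] (s, f)).2 + ((rwrStep val₀ C)^[k] (s', f')).2) := by
  induction k generalizing s s' f f' with
  | zero => rfl
  | succ k ih =>
    rw [Function.iterate_succ_apply, Function.iterate_succ_apply, Function.iterate_succ_apply,
      rwrStep_mul]
    have := ih (rwrStep val₀ C (s, f)).1 (rwrStep val₀ C (s', f')).1
      (rwrStep val₀ C (s, f)).2 (rwrStep val₀ C (s', f')).2
    simpa using this

end AuxCER2
section AuxCER3

variable {P B : Type*}

lemma iterate_neg (val₀ : P → Ratio) (C : Set (UnitG P B × Ratio × UnitG P B))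
    (k : ℕ) (s : Ratio) (f : RootG B) :
    (rwrStep val₀ C)^[k] (s⁻¹, -f) =
      (((rwrStep val₀ C)^[k] (s, f)).1⁻¹, -((rwrStep val₀ C)^[k] (s, f)).2) := by
  induction k generalizing s f with
  | zero => rfl
  | succ k ih =>
    rw [Function.iterate_succ_apply, Function.iterate_succ_apply, rwrStep_neg]
    have := ih (rwrStep val₀ C (s, f)).1 (rwrStep val₀ C (s, f)).2
    simpa using this

/-! ### `rwrStar` structure lemmas -/

lemma evalU_pair (val₀ : P → Ratio) (u : UnitG P B) :
    evalU val₀ u = (pvalU val₀ u, rootU u) := rfl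

lemma rwrStar_add (val₀ : P → Ratio) (C : Set (UnitG P B × Ratio × UnitG P B))
    [Finite B] (u v : UnitG P B) :
    rwrStar val₀ C (u + v) =
      ((rwrStar val₀ C u).1 * (rwrStar val₀ C v).1,
       (rwrStar val₀ C u).2 + (rwrStar val₀ C v).2) := by
  rw [rwrStar, evalU_pair, pvalU_add, rootU_add]
  rw [iterate_mul]
  rfl

lemma rwrStar_neg (val₀ : P → Ratio) (C : Set (UnitG P B × Ratio × UnitG P B))
    [Finite B] (u : UnitG P B) :
    rwrStar val₀ C (-u) = ((rwrStar val₀ C u).1⁻¹, -(rwrStar val₀ C u).2) := by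
  rw [rwrStar, evalU_pair, pvalU_neg, rootU_neg]
  rw [iterate_neg]
  rfl

lemma rwrStar_strip (val₀ : P → Ratio) (C : Set (UnitG P B × Ratio × UnitG P B))
    [Finite B] (u : UnitG P B) :
    rwrStar val₀ C u =
      (pvalU val₀ u * (rwrStar val₀ C (stripU u)).1, (rwrStar val₀ C (stripU u)).2) := by
  have h1 : evalU val₀ (stripU u) = (1, rootU u) :=
    Prod.ext (pvalU_stripU val₀ u) (rootU_stripU u)
  have h2 : evalU val₀ u = (pvalU val₀ u * 1, rootU u) := by
    rw [mul_one]; rfl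
  rw [rwrStar, h2, iterate_scale, rwrStar, h1]

end AuxCER3
section AuxCER4

variable {P B : Type*} (val₀ : P → Ratio) (C : Set (UnitG P B × Ratio × UnitG P B))

lemma cl_congr {u r v u' r' v' : _} (h : ClosureRel val₀ C u r v)
    (hu : u = u') (hr : r = r') (hv : v = v') : ClosureRel val₀ C u' r' v' := by
  subst hu; subst hr; subst hv; exact h

lemma cl_id (v : UnitG P B) : ClosureRel val₀ C v 1 v := by
  have h := ClosureRel.mul (ClosureRel.mul (ClosureRel.pe (val₀ := val₀) (C := C) v)
    (ClosureRel.pe' v)) (ClosureRel.inv (ClosureRel.pe (stripU v)))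
  refine cl_congr val₀ C h ?_ ?_ ?_
  · abel
  · rw [mul_inv_cancel, pvalU_stripU, inv_one, one_mul]
  · rw [stripU_stripU]; abel

lemma cl_zero : ClosureRel val₀ C 0 1 0 := cl_id val₀ C 0

lemma cl_zpow {q : Ratio} {x : UnitG P B} (h : ClosureRel val₀ C 0 q x) (z : ℤ) :
    ClosureRel val₀ C 0 (q ^ z) (z • x) := by
  induction z using Int.induction_on with
  | zero => exact cl_congr val₀ C (cl_zero val₀ C) rfl (rpow_zero q).symm (by simp)
  | succ n ih =>
    refine cl_congr val₀ C (ClosureRel.mul ih h) (by simp) ?_ ?_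
    · rw [rpow_add_one]
    · rw [add_smul, one_smul]
  | pred n ih =>
    refine cl_congr val₀ C (ClosureRel.mul ih (ClosureRel.inv h)) (by simp) ?_ ?_
    · rw [rpow_sub_one]
    · rw [sub_smul, one_smul, sub_eq_add_neg]

lemma cl_prodsum {ι : Type*} (S : Finset ι) (q : ι → Ratio) (x : ι → UnitG P B)
    (h : ∀ i ∈ S, ClosureRel val₀ C 0 (q i) (x i)) :
    ClosureRel val₀ C 0 (∏ i ∈ S, q i) (∑ i ∈ S, x i) := by
  classical
  induction S using Finset.induction_on with
  | empty => exact cl_congr val₀ C (cl_zero val₀ C) rfl (by simp) (by simp)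
  | @insert a S hna ih =>
    rw [Finset.prod_insert hna, Finset.sum_insert hna]
    exact cl_congr val₀ C
      (ClosureRel.mul (h a (Finset.mem_insert_self a S))
        (ih fun i hi => h i (Finset.mem_insert_of_mem hi)))
      (by simp) rfl rfl

lemma cl_rwrB (b : B) :
    ClosureRel val₀ C 0 (rwrB val₀ C b).1 (unrootU (rwrB val₀ C b).2 - deltaB P b) := by
  by_cases hb : b ∈ domC C
  · have h1 := ClosureRel.base (val₀ := val₀) (xpd_mem hb)
    have h2 := ClosureRel.pe (val₀ := val₀) (C := C) (xpd C b).2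
    have h3 := ClosureRel.inv (cl_id val₀ C (xpd C b).2)
    have h4 := ClosureRel.inv (cl_id val₀ C (deltaB P b))
    have h := ClosureRel.mul (ClosureRel.mul (ClosureRel.mul h1 h2) h3) h4
    refine cl_congr val₀ C h (by abel) ?_ ?_
    · rw [rwrB]; simp
    · simp only [stripU]
      rw [rwrB]
      abel
  · rw [rwrB_not_mem val₀ hb]
    refine cl_congr val₀ C (cl_zero val₀ C) rfl rfl ?_
    rw [unrootU_single, sub_self]

lemma cl_step {u : UnitG P B} (p : Ratio × RootG B)
    (h : ClosureRel val₀ C u p.1 (unrootU p.2)) :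
    ClosureRel val₀ C u (rwrStep val₀ C p).1 (unrootU (rwrStep val₀ C p).2) := by
  have hs := cl_prodsum val₀ C p.2.support (fun b => (rwrB val₀ C b).1 ^ p.2 b)
      (fun b => p.2 b • (unrootU (rwrB val₀ C b).2 - deltaB P b))
      (fun b _ => cl_zpow val₀ C (cl_rwrB val₀ C b) (p.2 b))
  have key : ∑ b ∈ p.2.support, p.2 b • (deltaB P b : UnitG P B) = unrootU p.2 := by
    have : ∀ b ∈ p.2.support, p.2 b • (deltaB P b : UnitG P B)
        = unrootU (Finsupp.single b (p.2 b)) := by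
      intro b _
      rw [← unrootU_single, ← unrootU_zsmul, Finsupp.smul_single, smul_eq_mul, mul_one]
    rw [Finset.sum_congr rfl this, ← unrootU_sum]
    congr 1
    exact Finsupp.sum_single p.2
  have h2 : ∑ b ∈ p.2.support, p.2 b • (unrootU (rwrB val₀ C b).2 - deltaB P b)
      = unrootU ((rwrStep val₀ C p).2) - unrootU p.2 := by
    simp only [smul_sub]
    rw [Finset.sum_sub_distrib, key, rwrStep_snd, unrootU_sum]
    congr 1
    apply Finset.sum_congr rfl
    intro b _
    rw [unrootU_zsmul]
  refine cl_congr val₀ C (ClosureRel.mul h hs) (by simp) rfl ?_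
  rw [h2, add_sub_cancel]

lemma cl_iter {u : UnitG P B} (k : ℕ) (p : Ratio × RootG B)
    (h : ClosureRel val₀ C u p.1 (unrootU p.2)) :
    ClosureRel val₀ C u ((rwrStep val₀ C)^[k] p).1 (unrootU ((rwrStep val₀ C)^[k] p).2) := by
  induction k generalizing p with
  | zero => exact h
  | succ k ih =>
    rw [Function.iterate_succ_apply]
    exact ih _ (cl_step val₀ C p h)

lemma cl_rwrStar [Finite B] (u : UnitG P B) :
    ClosureRel val₀ C u (rwrStar val₀ C u).1 (unrootU (rwrStar val₀ C u).2) :=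
  cl_iter val₀ C (Nat.card B) (evalU val₀ u) (ClosureRel.pe u)

end AuxCER4
section AuxCER5

variable {P B : Type*}

open Classical in
/-- A height measure on base units, compatible with the dependency order. -/
noncomputable def mB [Fintype B] (C : Set (UnitG P B × Ratio × UnitG P B))
    (hwf : WellFounded (Function.swap (DepOrd C))) : B → ℕ :=
  hwf.fix (fun b ih =>
    if b ∈ domC C then
      max 1 (((Finset.univ.filter (fun y => Depends C b y)).attach.sup
        (fun y => ih y.1 (Relation.TransGen.single (Finset.mem_filter.mp y.2).2) + 1)))
    else 0)

open Classical in
lemma mB_eq [Fintype B] (C : Set (UnitG P B × Ratio × UnitG P B))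
    (hwf : WellFounded (Function.swap (DepOrd C))) (b : B) :
    mB C hwf b = if b ∈ domC C then
      max 1 (((Finset.univ.filter (fun y => Depends C b y)).attach.sup
        (fun y => mB C hwf y.1 + 1)))
    else 0 := by
  rw [mB, WellFounded.fix_eq]

lemma mB_pos [Fintype B] {C : Set (UnitG P B × Ratio × UnitG P B)}
    (hwf : WellFounded (Function.swap (DepOrd C))) {b : B} (hb : b ∈ domC C) :
    1 ≤ mB C hwf b := by
  rw [mB_eq, if_pos hb]
  exact le_max_left _ _

lemma mB_not_mem [Fintype B] {C : Set (UnitG P B × Ratio × UnitG P B)}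
    (hwf : WellFounded (Function.swap (DepOrd C))) {b : B} (hb : b ∉ domC C) :
    mB C hwf b = 0 := by
  rw [mB_eq, if_neg hb]

lemma mB_lt [Fintype B] {C : Set (UnitG P B × Ratio × UnitG P B)}
    (hwf : WellFounded (Function.swap (DepOrd C))) {b y : B} (hb : b ∈ domC C)
    (hdep : Depends C b y) : mB C hwf y + 1 ≤ mB C hwf b := by
  classical
  rw [mB_eq C hwf b, if_pos hb]
  have hymem : y ∈ Finset.univ.filter (fun z => Depends C b z) :=
    Finset.mem_filter.mpr ⟨Finset.mem_univ y, hdep⟩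
  have hle := Finset.le_sup (f := fun y : {x // x ∈ Finset.univ.filter (fun z => Depends C b z)} =>
      mB C hwf y.1 + 1) (Finset.mem_attach _ ⟨y, hymem⟩)
  exact le_trans hle (le_max_right _ _)

lemma mB_le_card [Fintype B] {C : Set (UnitG P B × Ratio × UnitG P B)}
    (hwf : WellFounded (Function.swap (DepOrd C))) (b : B) :
    mB C hwf b ≤ Fintype.card B := by
  classical
  have irr : ∀ z : B, ¬ DepOrd C z z := fun z h => (hwf.isIrrefl).irrefl z h
  have main : ∀ b : B,
      mB C hwf b ≤ (insert b (Finset.univ.filter (fun y => DepOrd C b y))).card := by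
    intro b
    induction b using WellFounded.induction hwf with
    | _ b ih =>
      rw [mB_eq]
      split_ifs with hb
      · apply max_le
        · exact Finset.card_pos.mpr ⟨b, Finset.mem_insert_self _ _⟩
        · apply Finset.sup_le
          intro y _
          have hdep : Depends C b y.1 := (Finset.mem_filter.mp y.2).2
          have hord : DepOrd C b y.1 := Relation.TransGen.single hdep
          have hy := ih y.1 hord
          have hsub : insert y.1 (Finset.univ.filter (fun z => DepOrd C y.1 z)) ⊆
              Finset.univ.filter (fun z => DepOrd C b z) := by
            intro z hz
            rcases Finset.mem_insert.mp hz with rfl | hz'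
            · exact Finset.mem_filter.mpr ⟨Finset.mem_univ _, hord⟩
            · exact Finset.mem_filter.mpr
                ⟨Finset.mem_univ _, hord.trans (Finset.mem_filter.mp hz').2⟩
          have hcard := Finset.card_le_card hsub
          have hnot : b ∉ Finset.univ.filter (fun z => DepOrd C b z) := by
            simp only [Finset.mem_filter]
            rintro ⟨-, hbb⟩
            exact irr b hbb
          rw [Finset.card_insert_of_notMem hnot]
          omega
      · exact Nat.zero_le _
  refine le_trans (main b) ?_
  refine le_trans (Finset.card_le_card (Finset.subset_univ _)) ?_
  rw [Finset.card_univ]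

lemma rwr_fixed [Fintype B] (val₀ : P → Ratio) {C : Set (UnitG P B × Ratio × UnitG P B)}
    (hwf : WellFounded (Function.swap (DepOrd C))) :
    ∀ (k : ℕ) (p : Ratio × RootG B), (∀ b ∈ p.2.support, mB C hwf b ≤ k) →
    rwrStep val₀ C ((rwrStep val₀ C)^[k] p) = (rwrStep val₀ C)^[k] p := by
  intro k
  induction k with
  | zero =>
    intro p hp
    simp only [Function.iterate_zero, id]
    have hnd : ∀ b ∈ p.2.support, b ∉ domC C := by
      intro b hb hmem
      have h1 := hp b hb
      have h2 := mB_pos hwf hmem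
      omega
    have h1 : ∀ b ∈ p.2.support, (rwrB val₀ C b).1 ^ (p.2 b) = 1 := by
      intro b hb
      rw [rwrB_not_mem val₀ (hnd b hb)]
      exact one_rpow _
    have h2 : ∀ b ∈ p.2.support, p.2 b • (rwrB val₀ C b).2 = Finsupp.single b (p.2 b) := by
      intro b hb
      rw [rwrB_not_mem val₀ (hnd b hb), Finsupp.smul_single, smul_eq_mul, mul_one]
    refine Prod.ext ?_ ?_
    · rw [rwrStep_fst, Finset.prod_congr rfl h1, Finset.prod_const_one, mul_one]
    · rw [rwrStep_snd, Finset.sum_congr rfl h2]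
      exact Finsupp.sum_single p.2
  | succ k ih =>
    intro p hp
    rw [Function.iterate_succ_apply]
    apply ih
    intro y hy
    classical
    have heq : ((rwrStep val₀ C p).2) = p.2.sum (fun b k => k • (rwrB val₀ C b).2) := rfl
    have hsub : (p.2.sum (fun b k => k • (rwrB val₀ C b).2)).support ⊆
        p.2.support.biUnion (fun b => (p.2 b • (rwrB val₀ C b).2).support) :=
      Finsupp.support_sum
    rw [heq] at hy
    obtain ⟨b, hb, hyb⟩ := Finset.mem_biUnion.mp (hsub hy)
    have hyb' : y ∈ ((rwrB val₀ C b).2).support := Finsupp.support_smul hyb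
    by_cases hbd : b ∈ domC C
    · have hdep : Depends C b y := ⟨(xpd C b).1, (xpd C b).2, xpd_mem hbd, by
        rw [rwrB] at hyb'; exact hyb'⟩
      have hlt := mB_lt hwf hbd hdep
      have := hp b hb
      omega
    · rw [rwrB_not_mem val₀ hbd] at hyb'
      rw [Finsupp.support_single_ne_zero _ one_ne_zero] at hyb'
      obtain rfl := Finset.mem_singleton.mp hyb'
      have h0 := mB_not_mem hwf hbd
      omega

end AuxCER5
section AuxCER6

variable {P B : Type*}

lemma rwrStep_single (val₀ : P → Ratio) (C : Set (UnitG P B × Ratio × UnitG P B)) (b : B) :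
    rwrStep val₀ C (1, Finsupp.single b 1) = rwrB val₀ C b := by
  refine Prod.ext ?_ ?_
  · rw [rwrStep_fst]
    simp only [Finsupp.support_single_ne_zero _ one_ne_zero, Finset.prod_singleton,
      Finsupp.single_eq_same, rpow_one, one_mul]
  · rw [rwrStep_snd]
    simp only [Finsupp.support_single_ne_zero _ one_ne_zero, Finset.sum_singleton,
      Finsupp.single_eq_same, one_smul]

end AuxCER6
/-- Exhaustive rewriting solves the well-defined conversion problem: the closure of a
well-defining conversion equals the relation induced by exhaustive rewriting. -/
theorem closure_eq_rewriting {P B D : Type*} [Finite B] (val₀ : P → Ratio)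
    (dim₀ : B → D →₀ ℤ) (C : Set (UnitG P B × Ratio × UnitG P B))
    (hC : IsConversion dim₀ C) (hdef : IsDefining C)
    (hwf : WellFounded (Function.swap (DepOrd C))) :
    convClosure val₀ C = {t : UnitG P B × Ratio × UnitG P B |
      ∃ (r s : Ratio) (w : RootG B),
        rwrStar val₀ C t.1 = (r, w) ∧ rwrStar val₀ C t.2.2 = (s, w) ∧
        t.2.1 = r * s⁻¹} := by
  haveI : Fintype B := Fintype.ofFinite B
  ext x
  obtain ⟨u, t, v⟩ := x
  simp only [convClosure, Set.mem_setOf_eq]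
  constructor
  · intro h
    induction h with
    | @base u t v hmem =>
      obtain ⟨u₀, rfl⟩ := hdef.1 _ _ _ hmem
      have hd : u₀ ∈ domC C := ⟨t, v, hmem⟩
      have hm := xpd_mem hd
      have hv : (xpd C u₀).2 = v := hdef.2 _ _ _ _ _ hm hmem
      have ht : (xpd C u₀).1 = t := by
        apply hC.2 _ _ _ _ _ hmem
        rw [← hv]; exact hm
      have hxpd : xpd C u₀ = (t, v) := Prod.ext ht hv
      have hrwrB : rwrB val₀ C u₀ = (t * pvalU val₀ v, rootU v) := by
        rw [rwrB, hxpd]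
      haveI : Nonempty B := ⟨u₀⟩
      have hn : 1 ≤ Nat.card B := Nat.card_pos
      obtain ⟨m, hm'⟩ : ∃ m, Nat.card B = m + 1 := ⟨Nat.card B - 1, by omega⟩
      have hfix : rwrStep val₀ C ((rwrStep val₀ C)^[m] (pvalU val₀ v, rootU v)) =
          (rwrStep val₀ C)^[m] (pvalU val₀ v, rootU v) := by
        apply rwr_fixed val₀ hwf
        intro y hy
        have hdep : Depends C u₀ y := ⟨t, v, hmem, hy⟩
        have h1 := mB_lt hwf hd hdep
        have h2 := mB_le_card hwf u₀
        have h3 : Fintype.card B = m + 1 := by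
          rw [← Nat.card_eq_fintype_card, hm']
        omega
      set A := (rwrStep val₀ C)^[m] (pvalU val₀ v, rootU v) with hA
      have heval : evalU val₀ (deltaB P u₀) = ((1 : Ratio), Finsupp.single u₀ (1 : ℤ)) :=
        Prod.ext (pvalU_deltaB val₀ u₀) (rootU_deltaB u₀)
      have h1 : rwrStar val₀ C (deltaB P u₀) = (t * A.1, A.2) := by
        rw [rwrStar, heval, hm', Function.iterate_succ_apply, rwrStep_single, hrwrB]
        exact iterate_scale val₀ C m t (pvalU val₀ v) (rootU v)
      have h2 : rwrStar val₀ C v = A := by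
        rw [rwrStar, hm', Function.iterate_succ_apply']
        exact hfix
      exact ⟨t * A.1, A.1, A.2, h1, h2, (mul_inv_cancel_right t A.1).symm⟩
    | @mul u r v u' r' v' h h' ih ih' =>
      obtain ⟨r₁, s₁, w₁, e1, e2, e3⟩ := ih
      obtain ⟨r₂, s₂, w₂, f1, f2, f3⟩ := ih'
      refine ⟨r₁ * r₂, s₁ * s₂, w₁ + w₂, ?_, ?_, ?_⟩
      · rw [rwrStar_add, e1, f1]
      · rw [rwrStar_add, e2, f2]
      · rw [e3, f3, mul_inv, mul_mul_mul_comm]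
    | @inv u r v h ih =>
      obtain ⟨r₁, s₁, w₁, e1, e2, e3⟩ := ih
      refine ⟨r₁⁻¹, s₁⁻¹, -w₁, ?_, ?_, ?_⟩
      · rw [rwrStar_neg, e1]
      · rw [rwrStar_neg, e2]
      · rw [e3, mul_inv, inv_inv]
    | pe u =>
      refine ⟨pvalU val₀ u * (rwrStar val₀ C (stripU u)).1, (rwrStar val₀ C (stripU u)).1,
        (rwrStar val₀ C (stripU u)).2, ?_, ?_, ?_⟩
      · exact rwrStar_strip val₀ C u
      · rfl
      · exact (mul_inv_cancel_right _ _).symm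
    | pe' u =>
      refine ⟨(rwrStar val₀ C (stripU u)).1, pvalU val₀ u * (rwrStar val₀ C (stripU u)).1,
        (rwrStar val₀ C (stripU u)).2, ?_, ?_, ?_⟩
      · rfl
      · exact rwrStar_strip val₀ C u
      · rw [mul_inv, mul_left_comm, mul_inv_cancel, mul_one]
  · rintro ⟨r, s, w, h1, h2, h3⟩
    subst h3
    have hA := cl_rwrStar val₀ C u
    rw [h1] at hA
    have hB := cl_rwrStar val₀ C v
    rw [h2] at hB
    have h4 := ClosureRel.mul (ClosureRel.mul hA (ClosureRel.inv hB)) (cl_id val₀ C v)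
    refine cl_congr val₀ C h4 ?_ ?_ ?_
    · abel
    · rw [mul_one]
    · abel
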